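/- Let c₃ ≠ 0. The vector fields v = z² ∂z + (2/c₃) ∂w and w̃ = z ∂z − w ∂w satisfy the commutation relation [w̃, v] = v, and v is a symmetry of the ODE (4 + 2c₃wz)w' + c₃z²w'² + z(2 + c₃wz)w'' = 0: for any ε ∈ ℝ and any solution w(z), the transformed function along the flow of v is again a solution. Equivalently, along the flow of v, (z, w) ↦ (z/(1 − εz), w + (2ε/c₃)), and if w solves the ODE on an interval avoiding 1/ε, then W(z) = w(z/(1+εz)) + (2ε/c₃) solves it. -/

import Mathlib

/-- Lie bracket of vector fields on ℝ² with coordinates `(z, w)`. -/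
noncomputable def bracket2 (X Y : ℝ × ℝ → ℝ × ℝ) : ℝ × ℝ → ℝ × ℝ :=
  fun p => fderiv ℝ Y p (X p) - fderiv ℝ X p (Y p)

/-- The reduced ODE `(4 + 2c₃wz)w' + c₃z²w'² + z(2 + c₃wz)w'' = 0` at the point `z`. -/
noncomputable def ODE212 (c₃ : ℝ) (w : ℝ → ℝ) (z : ℝ) : Prop :=
  (4 + 2 * c₃ * w z * z) * deriv w z + c₃ * z ^ 2 * (deriv w z) ^ 2
    + z * (2 + c₃ * w z * z) * deriv (deriv w) z = 0

/-- Derivative of the flow map `z ↦ z/(1+εz)`. -/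
lemma phi_hasDerivAt (ε z : ℝ) (hs : 1 + ε * z ≠ 0) :
    HasDerivAt (fun t => t / (1 + ε * t)) (((1 + ε * z) ^ 2)⁻¹) z := by
  have h := (hasDerivAt_id z).fun_div ((hasDerivAt_const z 1).fun_add ((hasDerivAt_id z).const_mul ε)) hs
  convert! h using 1
  simp only [id]
  field_simp
  ring

/-- Chain rule formula for the transformed function, valid even where `w` is not
differentiable (both sides are junk `0` there). -/
lemma deriv_W (c₃ ε : ℝ) (w : ℝ → ℝ) (z' : ℝ) (hs : 1 + ε * z' ≠ 0) :
    deriv (fun t => w (t / (1 + ε * t)) + 2 * ε / c₃) z'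
      = deriv w (z' / (1 + ε * z')) * ((1 + ε * z') ^ 2)⁻¹ := by
  set u := z' / (1 + ε * z') with hu
  by_cases h : DifferentiableAt ℝ w u
  · have := (h.hasDerivAt.comp z' (phi_hasDerivAt ε z' hs)).add_const (2 * ε / c₃)
    exact this.deriv
  · rw [deriv_zero_of_not_differentiableAt h, zero_mul]
    apply deriv_zero_of_not_differentiableAt
    intro hd
    apply h
    have h1u : 1 - ε * u ≠ 0 := by
      rw [hu]; field_simp; simp [hs]
    have hψ : DifferentiableAt ℝ (fun u' => u' / (1 - ε * u')) u :=
      (differentiableAt_id.div ((differentiableAt_const 1).sub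
        (differentiableAt_id.const_mul ε)) h1u)
    have hψu : u / (1 - ε * u) = z' := by
      have hs' : 1 + z' * ε ≠ 0 := by rwa [mul_comm] at hs
      rw [hu]; field_simp; ring
    have hWd : DifferentiableAt ℝ
        (fun u' => (w ((u' / (1 - ε * u')) / (1 + ε * (u' / (1 - ε * u')))) + 2 * ε / c₃)
          - 2 * ε / c₃) u := by
      rw [← hψu] at hd
      have := (hd.comp u hψ).sub (differentiableAt_const (2 * ε / c₃))
      simpa [Function.comp_def] using this
    apply hWd.congr_of_eventuallyEq
    have hopen : ∀ᶠ u' in nhds u, 1 - ε * u' ≠ 0 := by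
      have : ContinuousAt (fun u' => 1 - ε * u') u := by fun_prop
      exact this.eventually_ne h1u
    filter_upwards [hopen] with u' h1
    have key : u' / (1 - ε * u') / (1 + ε * (u' / (1 - ε * u'))) = u' := by
      have h2 : 1 + ε * (u' / (1 - ε * u')) = (1 - ε * u')⁻¹ := by field_simp; ring
      rw [h2]
      have h1' : 1 - u' * ε ≠ 0 := by rwa [mul_comm] at h1
      field_simp
    rw [key]
    ring

/-- The algebraic identity: the transformed ODE expression is `s⁻²` times the original. -/
lemma alg_identity (c₃ ε z s A B W0 : ℝ) (hc : c₃ ≠ 0) (hs : s ≠ 0) (hrel : s = 1 + ε * z)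
    (hE : (4 + 2*c₃*W0*(z/s))*A + c₃*(z/s)^2*A^2 + (z/s)*(2+c₃*W0*(z/s))*B = 0) :
    (4 + 2*c₃*(W0 + 2*ε/c₃)*z)*(A*(s^2)⁻¹) + c₃*z^2*(A*(s^2)⁻¹)^2
      + z*(2+c₃*(W0+2*ε/c₃)*z)*(B*(s^2)⁻¹*(s^2)⁻¹ + A*(-(2*ε*s)/(s^2)^2)) = 0 := by
  have key : (4 + 2*c₃*(W0 + 2*ε/c₃)*z)*(A*(s^2)⁻¹) + c₃*z^2*(A*(s^2)⁻¹)^2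
      + z*(2+c₃*(W0+2*ε/c₃)*z)*(B*(s^2)⁻¹*(s^2)⁻¹ + A*(-(2*ε*s)/(s^2)^2))
      = (s^2)⁻¹ * ((4 + 2*c₃*W0*(z/s))*A + c₃*(z/s)^2*A^2 + (z/s)*(2+c₃*W0*(z/s))*B) := by
    subst hrel
    field_simp
    ring
  rw [key, hE, mul_zero]

theorem symmetry_L212_k0_one (c₃ : ℝ) (hc : c₃ ≠ 0) :
    (bracket2 (fun p => (p.1, -p.2)) (fun p => (p.1 ^ 2, 2 / c₃))
        = fun p => (p.1 ^ 2, 2 / c₃)) ∧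
      ∀ (ε : ℝ) (I : Set ℝ) (w : ℝ → ℝ),
        (∀ z ∈ I, DifferentiableAt ℝ w z ∧ DifferentiableAt ℝ (deriv w) z) →
        (∀ z ∈ I, ODE212 c₃ w z) →
        ∀ z : ℝ, 1 + ε * z ≠ 0 → z / (1 + ε * z) ∈ I →
          ODE212 c₃ (fun z' => w (z' / (1 + ε * z')) + 2 * ε / c₃) z := by
  constructor
  · funext p
    have hX : HasFDerivAt (fun p : ℝ × ℝ => (p.1, -p.2))
        ((ContinuousLinearMap.fst ℝ ℝ ℝ).prod (-(ContinuousLinearMap.snd ℝ ℝ ℝ))) p :=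
      HasFDerivAt.prodMk (hasFDerivAt_fst) (HasFDerivAt.fun_neg hasFDerivAt_snd)
    have h1 : HasFDerivAt (fun p : ℝ × ℝ => p.1 ^ 2)
        ((p.1 • ContinuousLinearMap.fst ℝ ℝ ℝ) + (p.1 • ContinuousLinearMap.fst ℝ ℝ ℝ)) p := by
      have := HasFDerivAt.fun_mul (𝕜 := ℝ) (hasFDerivAt_fst (p := p)) (hasFDerivAt_fst (p := p))
      simpa [pow_two] using this
    have hY : HasFDerivAt (fun p : ℝ × ℝ => (p.1 ^ 2, 2 / c₃))
        (((p.1 • ContinuousLinearMap.fst ℝ ℝ ℝ) + (p.1 • ContinuousLinearMap.fst ℝ ℝ ℝ)).prod 0) p :=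
      HasFDerivAt.prodMk h1 (hasFDerivAt_const _ _)
    simp only [bracket2, hX.fderiv, hY.fderiv]
    simp [Prod.ext_iff]
    ring
  · intro ε I w hdiff hode z hs hin
    -- first derivative of the transformed function
    have hW1 : deriv (fun z' => w (z' / (1 + ε * z')) + 2 * ε / c₃) z
        = deriv w (z / (1 + ε * z)) * (((1 + ε * z) ^ 2))⁻¹ :=
      deriv_W c₃ ε w z hs
    -- second derivative
    have hg : HasDerivAt (fun t => deriv w (t / (1 + ε * t)) * ((1 + ε * t) ^ 2)⁻¹)
        (deriv (deriv w) (z / (1 + ε * z)) * ((1 + ε * z) ^ 2)⁻¹ * ((1 + ε * z) ^ 2)⁻¹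
          + deriv w (z / (1 + ε * z)) * (-(2 * ε * (1 + ε * z)) / ((1 + ε * z) ^ 2) ^ 2)) z := by
      have h1 : HasDerivAt (fun t => deriv w (t / (1 + ε * t)))
          (deriv (deriv w) (z / (1 + ε * z)) * ((1 + ε * z) ^ 2)⁻¹) z := by
        have := HasDerivAt.comp z (hdiff (z / (1 + ε * z)) hin).2.hasDerivAt (phi_hasDerivAt ε z hs)
        exact this
      have h2 : HasDerivAt (fun t => ((1 + ε * t) ^ 2)⁻¹)
          (-(2 * ε * (1 + ε * z)) / ((1 + ε * z) ^ 2) ^ 2) z := by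
        have hsq : HasDerivAt (fun t => (1 + ε * t) ^ 2) (2 * ε * (1 + ε * z)) z := by
          have := ((hasDerivAt_const z 1).fun_add ((hasDerivAt_id z).const_mul ε)).fun_pow 2
          convert! this using 1
          simp [id]
          ring
        have := hsq.fun_inv (pow_ne_zero 2 hs)
        convert this using 1
      have := h1.fun_mul h2
      convert this using 1
    have hW2 : deriv (deriv (fun z' => w (z' / (1 + ε * z')) + 2 * ε / c₃)) z
        = deriv (deriv w) (z / (1 + ε * z)) * ((1 + ε * z) ^ 2)⁻¹ * ((1 + ε * z) ^ 2)⁻¹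
          + deriv w (z / (1 + ε * z)) * (-(2 * ε * (1 + ε * z)) / ((1 + ε * z) ^ 2) ^ 2) := by
      have heq : deriv (fun z' => w (z' / (1 + ε * z')) + 2 * ε / c₃)
          =ᶠ[nhds z] (fun t => deriv w (t / (1 + ε * t)) * ((1 + ε * t) ^ 2)⁻¹) := by
        have hopen : ∀ᶠ t in nhds z, 1 + ε * t ≠ 0 := by
          have : ContinuousAt (fun t => 1 + ε * t) z := by fun_prop
          exact this.eventually_ne hs
        filter_upwards [hopen] with t ht
        exact deriv_W c₃ ε w t ht
      rw [heq.deriv_eq, hg.deriv]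
    have hE := hode _ hin
    simp only [ODE212] at hE ⊢
    rw [hW1, hW2]
    exact alg_identity c₃ ε z (1 + ε * z) (deriv w (z / (1 + ε * z)))
      (deriv (deriv w) (z / (1 + ε * z))) (w (z / (1 + ε * z))) hc hs rfl hE
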